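/- arXiv:1701.05126 — 2 statements merged into one kernel-verified Lean document; each statement's English description precedes it below -/
import Mathlib

section
/- For complex $q$ with $0<|q|<1$, the Cesàro sum of the divergent series $\widetilde{F}(q)=\sum_{n\geq 0}(-1)^n(q;q)_n$ exists and equals $\frac{1}{2}\sigma(q)$, i.e., the arithmetic means $\frac{1}{N}\sum_{k=0}^{N-1} S_k$ of its partial sums $S_k = \sum_{n=0}^{k}(-1)^n(q;q)_n$ converge to $\frac{1}{2}\sigma(q)$ as $N\to\infty$. -/
open Filter Topology

/-- The q-Pochhammer symbol `(q;q)_n = ∏_{j=1}^n (1 - q^j)`. -/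
noncomputable def qPoch (q : ℂ) (n : ℕ) : ℂ := ∏ j ∈ Finset.range n, (1 - q ^ (j + 1))

lemma qPoch_zero (q : ℂ) : qPoch q 0 = 1 := by simp [qPoch]

lemma qPoch_succ (q : ℂ) (n : ℕ) : qPoch q (n + 1) = qPoch q n * (1 - q ^ (n + 1)) :=
  Finset.prod_range_succ _ _

/-- Key telescoping identity. -/
lemma key (q : ℂ) : ∀ N : ℕ,
    2 * ∑ k ∈ Finset.range N, (-1 : ℂ) ^ k * qPoch q k
      = 1 + (∑ k ∈ Finset.range N, (-1 : ℂ) ^ k * q ^ (k + 1) * qPoch q k)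
        - (-1 : ℂ) ^ N * qPoch q N := by
  intro N
  induction N with
  | zero => simp [qPoch_zero]
  | succ n ih =>
    rw [Finset.sum_range_succ, Finset.sum_range_succ, qPoch_succ, pow_succ]
    linear_combination ih

lemma qPoch_norm_le (q : ℂ) (hq : ‖q‖ < 1) (n : ℕ) :
    ‖qPoch q n‖ ≤ Real.exp (‖q‖ / (1 - ‖q‖)) := by
  have h1 : ‖qPoch q n‖ ≤ ∏ j ∈ Finset.range n, (1 + ‖q‖ ^ (j + 1)) := by
    refine (Finset.norm_prod_le _ _).trans (Finset.prod_le_prod (fun j _ => norm_nonneg _) ?_)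
    intro j _
    calc ‖1 - q ^ (j + 1)‖ ≤ ‖(1 : ℂ)‖ + ‖q ^ (j + 1)‖ := norm_sub_le _ _
      _ = 1 + ‖q‖ ^ (j + 1) := by rw [norm_one, norm_pow]
  refine h1.trans ?_
  have h2 : ∏ j ∈ Finset.range n, (1 + ‖q‖ ^ (j + 1))
      ≤ ∏ j ∈ Finset.range n, Real.exp (‖q‖ ^ (j + 1)) := by
    refine Finset.prod_le_prod (fun j _ => by positivity) (fun j _ => ?_)
    exact Real.add_one_le_exp _ |>.trans_eq' (by ring_nf)
  refine h2.trans ?_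
  rw [← Real.exp_sum]
  refine Real.exp_le_exp.2 ?_
  have hsum : Summable (fun j : ℕ => ‖q‖ ^ (j + 1)) := by
    have := (summable_geometric_of_lt_one (norm_nonneg q) hq).mul_left ‖q‖
    simpa [pow_succ, mul_comm, pow_succ'] using this
  calc ∑ j ∈ Finset.range n, ‖q‖ ^ (j + 1) ≤ ∑' j : ℕ, ‖q‖ ^ (j + 1) :=
        Summable.sum_le_tsum _ (fun j _ => by positivity) hsum
    _ = ‖q‖ * ∑' j : ℕ, ‖q‖ ^ j := by rw [← tsum_mul_left]; congr 1; ext j; rw [pow_succ']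
    _ = ‖q‖ * (1 - ‖q‖)⁻¹ := by rw [tsum_geometric_of_lt_one (norm_nonneg q) hq]
    _ = ‖q‖ / (1 - ‖q‖) := by rw [div_eq_mul_inv]

theorem cesaro_strangeF (q : ℂ) (hq0 : q ≠ 0) (hq : ‖q‖ < 1) :
    Tendsto (fun N : ℕ =>
        (∑ k ∈ Finset.range N, ∑ n ∈ Finset.range (k + 1), (-1 : ℂ) ^ n * qPoch q n) / N)
      atTop
      (𝓝 ((1 + ∑' n : ℕ, (-1 : ℂ) ^ n * q ^ (n + 1) * qPoch q n) / 2)) := by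
  set C : ℝ := Real.exp (‖q‖ / (1 - ‖q‖)) with hC
  have hCpos : 0 < C := Real.exp_pos _
  set t : ℕ → ℂ := fun n => (-1 : ℂ) ^ n * q ^ (n + 1) * qPoch q n with ht
  -- summability of t
  have hts : Summable t := by
    refine Summable.of_norm (Summable.of_nonneg_of_le (fun n => norm_nonneg _)
      (fun n => ?_) (((summable_geometric_of_lt_one (norm_nonneg q) hq)).mul_right (‖q‖ * C)))
    have : ‖t n‖ = ‖q‖ ^ (n + 1) * ‖qPoch q n‖ := by
      simp [ht, norm_mul, norm_pow]
    rw [this, pow_succ']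
    calc ‖q‖ * ‖q‖ ^ n * ‖qPoch q n‖ ≤ ‖q‖ * ‖q‖ ^ n * C := by
          have := qPoch_norm_le q hq n
          gcongr
      _ = ‖q‖ ^ n * (‖q‖ * C) := by ring
  set T : ℂ := ∑' n, t n with hT
  set U : ℕ → ℂ := fun N => ∑ n ∈ Finset.range N, t n with hU
  have hUtend : Tendsto U atTop (𝓝 T) := hts.hasSum.tendsto_sum_nat
  have hUbound : ∀ N, ‖U N‖ ≤ ∑' n, ‖t n‖ := by
    intro N
    calc ‖U N‖ ≤ ∑ n ∈ Finset.range N, ‖t n‖ := norm_sum_le _ _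
      _ ≤ ∑' n, ‖t n‖ := Summable.sum_le_tsum _ (fun n _ => norm_nonneg _) hts.norm
  set Bu : ℝ := ∑' n, ‖t n‖ with hBu
  -- decompose partial sums via key identity
  have hS : ∀ k : ℕ, ∑ n ∈ Finset.range (k + 1), (-1 : ℂ) ^ n * qPoch q n
      = (1 + U (k + 1)) / 2 + (-1 : ℂ) ^ k * qPoch q (k + 1) / 2 := by
    intro k
    have h := key q (k + 1)
    rw [pow_succ] at h
    linear_combination h / 2
  -- Part 1: Cesàro of the convergent part
  have h1 : Tendsto (fun N : ℕ => ((N : ℝ)⁻¹ : ℝ) •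
      ∑ k ∈ Finset.range N, ((1 + U (k + 1)) / 2)) atTop (𝓝 ((1 + T) / 2)) := by
    refine Tendsto.cesaro_smul ?_
    have : Tendsto (fun k : ℕ => U (k + 1)) atTop (𝓝 T) :=
      hUtend.comp (tendsto_add_atTop_nat 1)
    exact (this.const_add 1).div_const 2
  -- Part 2: the oscillating part is bounded, so its Cesàro average tends to 0
  have hVbound : ∀ N : ℕ, ‖∑ k ∈ Finset.range N, (-1 : ℂ) ^ k * qPoch q (k + 1) / 2‖
      ≤ (2 + Bu + C) / 4 := by
    intro N
    have hid : ∑ k ∈ Finset.range N, (-1 : ℂ) ^ k * qPoch q (k + 1) / 2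
        = (1 - U (N + 1) - (-1 : ℂ) ^ N * qPoch q (N + 1)) / 4 := by
      have h := key q (N + 1)
      have hshift : ∑ k ∈ Finset.range (N + 1), (-1 : ℂ) ^ k * qPoch q k
          = (∑ k ∈ Finset.range N, (-1 : ℂ) ^ (k + 1) * qPoch q (k + 1)) + 1 := by
        rw [Finset.sum_range_succ']
        simp [qPoch_zero]
      rw [hshift, pow_succ] at h
      have hneg : ∑ k ∈ Finset.range N, (-1 : ℂ) ^ (k + 1) * qPoch q (k + 1)
          = -∑ k ∈ Finset.range N, (-1 : ℂ) ^ k * qPoch q (k + 1) := by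
        rw [← Finset.sum_neg_distrib]
        refine Finset.sum_congr rfl (fun k _ => by rw [pow_succ]; ring)
      rw [hneg] at h
      rw [← Finset.sum_div]
      linear_combination -h / 4
    rw [hid]
    have h1 : ‖(1 : ℂ) - U (N + 1) - (-1 : ℂ) ^ N * qPoch q (N + 1)‖ ≤ 2 + Bu + C := by
      calc ‖(1 : ℂ) - U (N + 1) - (-1 : ℂ) ^ N * qPoch q (N + 1)‖
          ≤ ‖(1 : ℂ) - U (N + 1)‖ + ‖(-1 : ℂ) ^ N * qPoch q (N + 1)‖ := norm_sub_le _ _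
        _ ≤ (‖(1 : ℂ)‖ + ‖U (N + 1)‖) + ‖(-1 : ℂ) ^ N * qPoch q (N + 1)‖ := by
            gcongr; exact norm_sub_le _ _
        _ ≤ (1 + Bu) + C := by
            have := hUbound (N + 1)
            have h2 : ‖(-1 : ℂ) ^ N * qPoch q (N + 1)‖ = ‖qPoch q (N + 1)‖ := by
              rw [norm_mul, norm_pow, norm_neg, norm_one, one_pow, one_mul]
            rw [norm_one, h2]
            have := qPoch_norm_le q hq (N + 1)
            gcongr
        _ ≤ 2 + Bu + C := by linarith
    calc ‖((1 : ℂ) - U (N + 1) - (-1 : ℂ) ^ N * qPoch q (N + 1)) / 4‖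
        = ‖(1 : ℂ) - U (N + 1) - (-1 : ℂ) ^ N * qPoch q (N + 1)‖ / 4 := by
          rw [norm_div]; norm_num
      _ ≤ (2 + Bu + C) / 4 := by linarith
  have h2 : Tendsto (fun N : ℕ => ((N : ℝ)⁻¹ : ℝ) •
      ∑ k ∈ Finset.range N, ((-1 : ℂ) ^ k * qPoch q (k + 1) / 2)) atTop (𝓝 0) := by
    have hb : ∀ N : ℕ, ‖((N : ℝ)⁻¹ : ℝ) • ∑ k ∈ Finset.range N, ((-1 : ℂ) ^ k * qPoch q (k + 1) / 2)‖
        ≤ (N : ℝ)⁻¹ * ((2 + Bu + C) / 4) := by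
      intro N
      rw [norm_smul, norm_inv, Real.norm_natCast]
      gcongr
      exact hVbound N
    have ht0 : Tendsto (fun N : ℕ => (N : ℝ)⁻¹ * ((2 + Bu + C) / 4)) atTop (𝓝 0) := by
      have : Tendsto (fun N : ℕ => (N : ℝ)⁻¹) atTop (𝓝 0) := by
        simpa using (tendsto_one_div_atTop_nhds_zero_nat : Tendsto (fun n : ℕ => 1 / (n : ℝ)) atTop (𝓝 0))
      simpa using this.mul_const ((2 + Bu + C) / 4)
    exact squeeze_zero_norm hb ht0
  -- combine
  have hcomb := h1.add h2
  rw [add_zero] at hcomb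
  refine hcomb.congr (fun N => ?_)
  rw [← smul_add, ← Finset.sum_add_distrib]
  have : ∑ k ∈ Finset.range N, ((1 + U (k + 1)) / 2 + (-1 : ℂ) ^ k * qPoch q (k + 1) / 2)
      = ∑ k ∈ Finset.range N, ∑ n ∈ Finset.range (k + 1), (-1 : ℂ) ^ n * qPoch q n := by
    refine Finset.sum_congr rfl (fun k _ => (hS k).symm)
  rw [this, div_eq_inv_mul, Complex.real_smul]
  push_cast
  ring
end

section
/- For complex $q$ with $|q|<1$, Fine's identity holds: $\sum_{n=0}^\infty \frac{q^{n^2}}{(-q;q)_n^2} = 1 - \sum_{n=1}^\infty \frac{(-1)^n q^n}{(-q;q)_n}$, both sides converging absolutely. -/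
open Filter Topology

/-- The q-Pochhammer symbol `(-q;q)_n = ∏_{j=1}^n (1 + q^j)`. -/
noncomputable def negPoch (q : ℂ) (n : ℕ) : ℂ := ∏ j ∈ Finset.range n, (1 + q ^ (j + 1))

lemma negPoch_zero (q : ℂ) : negPoch q 0 = 1 := rfl

lemma negPoch_succ (q : ℂ) (n : ℕ) : negPoch q (n + 1) = negPoch q n * (1 + q ^ (n + 1)) :=
  Finset.prod_range_succ _ _

/-- elementary: `exp (-(a/(1-r))) ≤ 1 - a` when `0 ≤ a ≤ r < 1`. -/
lemma exp_aux {r a : ℝ} (h0 : 0 ≤ a) (har : a ≤ r) (hr : r < 1) :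
    Real.exp (-(a / (1 - r))) ≤ 1 - a := by
  have hr1 : 0 < 1 - r := by linarith
  have ha1 : 0 < 1 - a := by linarith
  have h1 : 1 + a / (1 - r) ≤ Real.exp (a / (1 - r)) := by
    have := Real.add_one_le_exp (a / (1 - r)); linarith
  have key : 1 ≤ (1 - a) * (1 - r)⁻¹ := by
    rw [← div_eq_mul_inv, le_div_iff₀ hr1]; linarith
  have h2 : (1 : ℝ) ≤ (1 - a) * (1 + a / (1 - r)) := by
    have hd : a / (1 - r) = a * (1 - r)⁻¹ := div_eq_mul_inv a _
    rw [hd]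
    nlinarith [mul_le_mul_of_nonneg_right key h0]
  set E := Real.exp (a / (1 - r)) with hE
  have hEpos : 0 < E := Real.exp_pos _
  have h3 : 1 ≤ (1 - a) * E :=
    h2.trans (mul_le_mul_of_nonneg_left h1 (le_of_lt ha1))
  have : E⁻¹ ≤ 1 - a := by
    calc E⁻¹ = 1 * E⁻¹ := (one_mul _).symm
      _ ≤ ((1 - a) * E) * E⁻¹ := by
          exact mul_le_mul_of_nonneg_right h3 (le_of_lt (inv_pos.mpr hEpos))
      _ = 1 - a := by field_simp
  rw [Real.exp_neg]
  exact this

lemma tele_alg (P0 P1 P2 x z A : ℂ) (h1 : P1 = P0 * (1 + x)) (h2 : P2 = P1 * (1 + z))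
    (hP0 : P0 ≠ 0) (hx : (1 : ℂ) + x ≠ 0) (hz : (1 : ℂ) + z ≠ 0) :
    2 - A / (P0 * P1) + (A / P1 ^ 2 + A * x / (P1 * P2)) = 2 - A * (x * z) / (P1 * P2) := by
  have hP1 : P1 ≠ 0 := by rw [h1]; exact mul_ne_zero hP0 hx
  have hP2 : P2 ≠ 0 := by rw [h2]; exact mul_ne_zero hP1 hz
  have key : A / P1 ^ 2 + (A * x + A * (x * z)) / (P1 * P2) = A / (P0 * P1) := by
    rw [div_add_div _ _ (pow_ne_zero 2 hP1) (mul_ne_zero hP1 hP2),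
      div_eq_div_iff (mul_ne_zero (pow_ne_zero 2 hP1) (mul_ne_zero hP1 hP2))
        (mul_ne_zero hP0 hP1)]
    subst h2; subst h1; ring
  linear_combination key

section Main
variable {q : ℂ} (hq : ‖q‖ < 1)
include hq

/-- uniform positive lower bound for `‖negPoch q n‖`. -/
noncomputable def pochLB (q : ℂ) : ℝ := Real.exp (-(‖q‖ / ((1 - ‖q‖) * (1 - ‖q‖))))

omit hq in
lemma pochLB_pos (q : ℂ) : 0 < pochLB q := Real.exp_pos _

lemma negPoch_norm_lb (n : ℕ) : pochLB q ≤ ‖negPoch q n‖ := by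
  have hr0 : (0:ℝ) ≤ ‖q‖ := norm_nonneg q
  have hr1 : 0 < 1 - ‖q‖ := by linarith
  have step1 : ∏ j ∈ Finset.range n, Real.exp (-(‖q‖ ^ (j+1) / (1 - ‖q‖)))
      ≤ ‖negPoch q n‖ := by
    rw [negPoch, norm_prod]
    apply Finset.prod_le_prod (fun j _ => le_of_lt (Real.exp_pos _))
    intro j _
    have ha0 : (0:ℝ) ≤ ‖q‖ ^ (j+1) := by positivity
    have har : ‖q‖ ^ (j+1) ≤ ‖q‖ := by
      calc ‖q‖ ^ (j+1) ≤ ‖q‖ ^ 1 := pow_le_pow_of_le_one hr0 (le_of_lt hq) (by omega)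
        _ = ‖q‖ := pow_one _
    have h1 : Real.exp (-(‖q‖ ^ (j+1) / (1 - ‖q‖))) ≤ 1 - ‖q‖ ^ (j+1) :=
      exp_aux ha0 har hq
    have h2 : 1 - ‖q‖ ^ (j+1) ≤ ‖1 + q ^ (j+1)‖ := by
      have := norm_sub_norm_le (1 : ℂ) (-(q ^ (j+1)))
      simpa [norm_pow] using this
    linarith
  have step2 : pochLB q ≤ ∏ j ∈ Finset.range n, Real.exp (-(‖q‖ ^ (j+1) / (1 - ‖q‖))) := by
    rw [← Real.exp_sum]
    apply Real.exp_le_exp.mpr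
    rw [neg_le, ← Finset.sum_neg_distrib]
    simp only [neg_neg]
    have hsum : ∑ j ∈ Finset.range n, ‖q‖ ^ (j+1) / (1 - ‖q‖)
        ≤ ‖q‖ / ((1 - ‖q‖) * (1 - ‖q‖)) := by
      rw [← Finset.sum_div]
      rw [div_le_div_iff₀ hr1 (by positivity)]
      have hgeo : ∑ j ∈ Finset.range n, ‖q‖ ^ (j+1) ≤ ‖q‖ * (1 - ‖q‖)⁻¹ := by
        have : ∑ j ∈ Finset.range n, ‖q‖ ^ (j+1) = ‖q‖ * ∑ j ∈ Finset.range n, ‖q‖ ^ j := by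
          rw [Finset.mul_sum]; exact Finset.sum_congr rfl fun j _ => by ring
        rw [this]
        have : ∑ j ∈ Finset.range n, ‖q‖ ^ j ≤ (1 - ‖q‖)⁻¹ :=
          (Summable.sum_le_tsum _ (fun i _ => by positivity)
            (summable_geometric_of_lt_one hr0 hq)).trans
            (by rw [tsum_geometric_of_lt_one hr0 hq])
        exact mul_le_mul_of_nonneg_left this hr0
      calc (∑ j ∈ Finset.range n, ‖q‖ ^ (j+1)) * ((1 - ‖q‖) * (1 - ‖q‖))
          ≤ (‖q‖ * (1 - ‖q‖)⁻¹) * ((1 - ‖q‖) * (1 - ‖q‖)) := by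
            exact mul_le_mul_of_nonneg_right hgeo (by positivity)
        _ = ‖q‖ * (1 - ‖q‖) := by
            rw [show (‖q‖ * (1 - ‖q‖)⁻¹) * ((1 - ‖q‖) * (1 - ‖q‖))
                = ‖q‖ * ((1 - ‖q‖)⁻¹ * (1 - ‖q‖)) * (1 - ‖q‖) by ring,
              inv_mul_cancel₀ (ne_of_gt hr1), mul_one]
    exact hsum
  exact step2.trans step1

lemma negPoch_ne_zero (n : ℕ) : negPoch q n ≠ 0 := by
  intro h
  have := negPoch_norm_lb hq (q := q) n
  rw [h, norm_zero] at this
  exact absurd this (not_le.mpr (pochLB_pos q))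


lemma norm_negPoch_inv_le (n : ℕ) : ‖negPoch q n‖⁻¹ ≤ (pochLB q)⁻¹ :=
  inv_anti₀ (pochLB_pos q) (negPoch_norm_lb hq n)

omit hq in
lemma summable_geom_bound (f : ℕ → ℂ) (K : ℝ) (h : ∀ n, ‖f n‖ ≤ K * ‖q‖ ^ n)
    (hq : ‖q‖ < 1) : Summable fun n => ‖f n‖ :=
  Summable.of_nonneg_of_le (fun n => norm_nonneg _) h
    ((summable_geometric_of_lt_one (norm_nonneg q) hq).mul_left K)

lemma summable_L_norm : Summable fun n : ℕ => ‖q ^ (n ^ 2) / (negPoch q n) ^ 2‖ := by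
  apply summable_geom_bound _ ((pochLB q)⁻¹ * (pochLB q)⁻¹) _ hq
  intro n
  rw [norm_div, norm_pow, norm_pow]
  have h1 : ‖q‖ ^ (n ^ 2) ≤ ‖q‖ ^ n :=
    pow_le_pow_of_le_one (norm_nonneg q) (le_of_lt hq) (Nat.le_self_pow two_ne_zero n)
  have h2 : (‖negPoch q n‖ ^ 2)⁻¹ ≤ (pochLB q)⁻¹ * (pochLB q)⁻¹ := by
    rw [sq, mul_inv]
    exact mul_le_mul (norm_negPoch_inv_le hq n) (norm_negPoch_inv_le hq n)
      (by positivity) (inv_nonneg.mpr (le_of_lt (pochLB_pos q)))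
  calc ‖q‖ ^ n ^ 2 / ‖negPoch q n‖ ^ 2
      = ‖q‖ ^ n ^ 2 * (‖negPoch q n‖ ^ 2)⁻¹ := div_eq_mul_inv _ _
    _ ≤ ‖q‖ ^ n * ((pochLB q)⁻¹ * (pochLB q)⁻¹) := by
        exact mul_le_mul h1 h2 (by positivity) (by positivity)
    _ = (pochLB q)⁻¹ * (pochLB q)⁻¹ * ‖q‖ ^ n := by ring

lemma summable_R_norm :
    Summable fun n : ℕ => ‖(-1 : ℂ) ^ (n + 1) * q ^ (n + 1) / negPoch q (n + 1)‖ := by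
  apply summable_geom_bound _ ((pochLB q)⁻¹) _ hq
  intro n
  rw [norm_div, norm_mul, norm_pow, norm_pow, norm_neg, norm_one, one_pow, one_mul]
  have h1 : ‖q‖ ^ (n + 1) ≤ ‖q‖ ^ n :=
    pow_le_pow_of_le_one (norm_nonneg q) (le_of_lt hq) (by omega)
  calc ‖q‖ ^ (n+1) / ‖negPoch q (n+1)‖
      = ‖q‖ ^ (n+1) * ‖negPoch q (n+1)‖⁻¹ := div_eq_mul_inv _ _
    _ ≤ ‖q‖ ^ n * (pochLB q)⁻¹ := by
        exact mul_le_mul h1 (norm_negPoch_inv_le hq (n+1)) (by positivity) (by positivity)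
    _ = (pochLB q)⁻¹ * ‖q‖ ^ n := by ring

lemma summable_T_norm :
    Summable fun n : ℕ => ‖q ^ (n ^ 2 + n) / (negPoch q n * negPoch q (n + 1))‖ := by
  apply summable_geom_bound _ ((pochLB q)⁻¹ * (pochLB q)⁻¹) _ hq
  intro n
  rw [norm_div, norm_mul, norm_pow]
  have h1 : ‖q‖ ^ (n ^ 2 + n) ≤ ‖q‖ ^ n :=
    pow_le_pow_of_le_one (norm_nonneg q) (le_of_lt hq)
      (le_trans (Nat.le_self_pow two_ne_zero n) (Nat.le_add_right _ _))
  have h2 : (‖negPoch q n‖ * ‖negPoch q (n+1)‖)⁻¹ ≤ (pochLB q)⁻¹ * (pochLB q)⁻¹ := by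
    rw [mul_inv]
    exact mul_le_mul (norm_negPoch_inv_le hq n) (norm_negPoch_inv_le hq (n+1))
      (by positivity) (inv_nonneg.mpr (le_of_lt (pochLB_pos q)))
  calc ‖q‖ ^ (n ^ 2 + n) / (‖negPoch q n‖ * ‖negPoch q (n+1)‖)
      = ‖q‖ ^ (n ^ 2 + n) * (‖negPoch q n‖ * ‖negPoch q (n+1)‖)⁻¹ := div_eq_mul_inv _ _
    _ ≤ ‖q‖ ^ n * ((pochLB q)⁻¹ * (pochLB q)⁻¹) := by
        exact mul_le_mul h1 h2 (by positivity) (by positivity)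
    _ = (pochLB q)⁻¹ * (pochLB q)⁻¹ * ‖q‖ ^ n := by ring

lemma summable_S_norm (N : ℕ) :
    Summable fun m : ℕ => ‖(-1 : ℂ) ^ m * q ^ ((N + 1) * m) / negPoch q (N + m)‖ := by
  apply summable_geom_bound _ ((pochLB q)⁻¹) _ hq
  intro m
  rw [norm_div, norm_mul, norm_pow, norm_pow, norm_neg, norm_one, one_pow, one_mul]
  have h1 : ‖q‖ ^ ((N + 1) * m) ≤ ‖q‖ ^ m :=
    pow_le_pow_of_le_one (norm_nonneg q) (le_of_lt hq) (Nat.le_mul_of_pos_left m (by omega))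
  calc ‖q‖ ^ ((N+1)*m) / ‖negPoch q (N+m)‖
      = ‖q‖ ^ ((N+1)*m) * ‖negPoch q (N+m)‖⁻¹ := div_eq_mul_inv _ _
    _ ≤ ‖q‖ ^ m * (pochLB q)⁻¹ := by
        exact mul_le_mul h1 (norm_negPoch_inv_le hq (N+m)) (by positivity) (by positivity)
    _ = (pochLB q)⁻¹ * ‖q‖ ^ m := by ring


lemma one_add_pow_ne_zero (n : ℕ) : (1 : ℂ) + q ^ (n + 1) ≠ 0 := by
  intro h
  have hlt : ‖q ^ (n + 1)‖ < 1 := by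
    rw [norm_pow]
    exact pow_lt_one₀ (norm_nonneg q) hq (by omega)
  have : q ^ (n + 1) = -1 := by linear_combination h
  rw [this] at hlt
  simp at hlt

end Main

/-- auxiliary series. -/
noncomputable def Sf (q : ℂ) (N : ℕ) : ℂ :=
  ∑' m : ℕ, (-1 : ℂ) ^ m * q ^ ((N + 1) * m) / negPoch q (N + m)

section Main2
variable {q : ℂ} (hq : ‖q‖ < 1)
include hq

lemma summable_S (N : ℕ) :
    Summable fun m : ℕ => (-1 : ℂ) ^ m * q ^ ((N + 1) * m) / negPoch q (N + m) :=
  (summable_S_norm hq N).of_norm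

lemma Sf_step (N : ℕ) :
    Sf q N * (1 + q ^ (N + 1)) = 1 / negPoch q N + q ^ (N + 1) * (q ^ (N + 1) * Sf q (N + 1)) := by
  set U : ℂ := ∑' k : ℕ, (-1 : ℂ) ^ k * q ^ ((N + 1) * k) / negPoch q (N + 1 + k) with hU
  have hsumU : Summable fun k : ℕ => (-1 : ℂ) ^ k * q ^ ((N + 1) * k) / negPoch q (N + 1 + k) := by
    have := summable_S hq (N + 1)
    -- compare termwise with a geometric bound instead
    apply (summable_geom_bound (q := q) _ ((pochLB q)⁻¹) ?_ hq).of_norm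
    intro m
    rw [norm_div, norm_mul, norm_pow, norm_pow, norm_neg, norm_one, one_pow, one_mul]
    have h1 : ‖q‖ ^ ((N + 1) * m) ≤ ‖q‖ ^ m :=
      pow_le_pow_of_le_one (norm_nonneg q) (le_of_lt hq) (Nat.le_mul_of_pos_left m (by omega))
    calc ‖q‖ ^ ((N+1)*m) / ‖negPoch q (N+1+m)‖
        = ‖q‖ ^ ((N+1)*m) * ‖negPoch q (N+1+m)‖⁻¹ := div_eq_mul_inv _ _
      _ ≤ ‖q‖ ^ m * (pochLB q)⁻¹ := by
          exact mul_le_mul h1 (norm_negPoch_inv_le hq (N+1+m)) (by positivity) (by positivity)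
      _ = (pochLB q)⁻¹ * ‖q‖ ^ m := by ring
  have e1 : Sf q N = 1 / negPoch q N - q ^ (N + 1) * U := by
    rw [Sf, Summable.tsum_eq_zero_add (summable_S hq N)]
    have h0 : (-1 : ℂ) ^ 0 * q ^ ((N + 1) * 0) / negPoch q (N + 0) = 1 / negPoch q N := by
      norm_num
    have hterm : ∀ k : ℕ, (-1 : ℂ) ^ (k + 1) * q ^ ((N + 1) * (k + 1)) / negPoch q (N + (k + 1))
        = -(q ^ (N + 1) * ((-1 : ℂ) ^ k * q ^ ((N + 1) * k) / negPoch q (N + 1 + k))) := by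
      intro k
      rw [show N + (k + 1) = N + 1 + k by omega,
        show (N + 1) * (k + 1) = (N + 1) * k + (N + 1) by ring, pow_add, pow_succ]
      ring
    have h1 : (∑' k : ℕ, (-1 : ℂ) ^ (k + 1) * q ^ ((N + 1) * (k + 1)) / negPoch q (N + (k + 1)))
        = -(q ^ (N + 1) * U) := by
      rw [tsum_congr hterm, tsum_neg, tsum_mul_left]
    rw [h0, h1]
    ring
  have e2 : Sf q N = U + q ^ (N + 1) * Sf q (N + 1) := by
    have hterm : ∀ m : ℕ, (-1 : ℂ) ^ m * q ^ ((N + 1) * m) / negPoch q (N + m)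
        = (-1 : ℂ) ^ m * q ^ ((N + 1) * m) / negPoch q (N + 1 + m)
          + q ^ (N + 1) * ((-1 : ℂ) ^ m * q ^ ((N + 1 + 1) * m) / negPoch q (N + 1 + m)) := by
      intro m
      have hPm : negPoch q (N + m) ≠ 0 := negPoch_ne_zero hq _
      have hfac : (1 : ℂ) + q ^ (N + 1) * q ^ m ≠ 0 := by
        have := one_add_pow_ne_zero hq (N + m)
        rwa [show N + m + 1 = (N + 1) + m by omega, pow_add] at this
      have hrw : negPoch q (N + 1 + m) = negPoch q (N + m) * (1 + q ^ (N + 1) * q ^ m) := by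
        rw [show N + 1 + m = (N + m) + 1 by omega, negPoch_succ,
          show N + m + 1 = (N + 1) + m by omega, pow_add]
      rw [hrw, show (N + 1 + 1) * m = (N + 1) * m + m by ring, pow_add q ((N + 1) * m) m,
        mul_div_assoc', ← add_div,
        div_eq_div_iff hPm (mul_ne_zero hPm hfac)]
      ring
    rw [Sf, tsum_congr hterm, Summable.tsum_add hsumU (by
      have : Summable fun m : ℕ => (-1 : ℂ) ^ m * q ^ ((N + 1 + 1) * m) / negPoch q (N + 1 + m) :=
        summable_S hq (N + 1)
      exact this.mul_left _), tsum_mul_left]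
    rfl
  linear_combination e1 + q ^ (N + 1) * e2


lemma S_term_bound (N m : ℕ) :
    ‖(-1 : ℂ) ^ m * q ^ ((N + 1) * m) / negPoch q (N + m)‖ ≤ (pochLB q)⁻¹ * ‖q‖ ^ m := by
  rw [norm_div, norm_mul, norm_pow, norm_pow, norm_neg, norm_one, one_pow, one_mul]
  have h1 : ‖q‖ ^ ((N + 1) * m) ≤ ‖q‖ ^ m :=
    pow_le_pow_of_le_one (norm_nonneg q) (le_of_lt hq) (Nat.le_mul_of_pos_left m (by omega))
  calc ‖q‖ ^ ((N+1)*m) / ‖negPoch q (N+m)‖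
      = ‖q‖ ^ ((N+1)*m) * ‖negPoch q (N+m)‖⁻¹ := div_eq_mul_inv _ _
    _ ≤ ‖q‖ ^ m * (pochLB q)⁻¹ := by
        exact mul_le_mul h1 (norm_negPoch_inv_le hq (N+m)) (by positivity) (by positivity)
    _ = (pochLB q)⁻¹ * ‖q‖ ^ m := by ring

lemma Sf_norm_le (N : ℕ) : ‖Sf q N‖ ≤ (pochLB q)⁻¹ * (1 - ‖q‖)⁻¹ := by
  have h1 : ‖Sf q N‖ ≤ ∑' m : ℕ, ‖(-1 : ℂ) ^ m * q ^ ((N + 1) * m) / negPoch q (N + m)‖ :=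
    norm_tsum_le_tsum_norm (summable_S_norm hq N)
  have h2 : (∑' m : ℕ, ‖(-1 : ℂ) ^ m * q ^ ((N + 1) * m) / negPoch q (N + m)‖)
      ≤ ∑' m : ℕ, (pochLB q)⁻¹ * ‖q‖ ^ m := by
    apply Summable.tsum_le_tsum (S_term_bound hq N) (summable_S_norm hq N)
    exact (summable_geometric_of_lt_one (norm_nonneg q) hq).mul_left _
  have h3 : (∑' m : ℕ, (pochLB q)⁻¹ * ‖q‖ ^ m) = (pochLB q)⁻¹ * (1 - ‖q‖)⁻¹ := by
    rw [tsum_mul_left, tsum_geometric_of_lt_one (norm_nonneg q) hq]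
  linarith

lemma Sf_unroll : ∀ N : ℕ, Sf q 0
    = (∑ n ∈ Finset.range N, q ^ (n ^ 2 + n) / (negPoch q n * negPoch q (n + 1)))
      + q ^ (N ^ 2 + N) / negPoch q N * Sf q N := by
  intro N
  induction N with
  | zero => simp [negPoch_zero]
  | succ N ih =>
    rw [Finset.sum_range_succ]
    have hPN : negPoch q N ≠ 0 := negPoch_ne_zero hq N
    have hx : (1 : ℂ) + q ^ (N + 1) ≠ 0 := one_add_pow_ne_zero hq N
    have hP1 : negPoch q (N + 1) = negPoch q N * (1 + q ^ (N + 1)) := negPoch_succ q N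
    have key : q ^ (N ^ 2 + N) / negPoch q N * Sf q N
        = q ^ (N ^ 2 + N) / (negPoch q N * negPoch q (N + 1))
          + q ^ ((N + 1) ^ 2 + (N + 1)) / negPoch q (N + 1) * Sf q (N + 1) := by
      have step := Sf_step hq N
      rw [show (N + 1) ^ 2 + (N + 1) = (N ^ 2 + N) + ((N + 1) + (N + 1)) by ring,
        pow_add q (N ^ 2 + N) ((N + 1) + (N + 1)), pow_add q (N + 1) (N + 1), hP1]
      field_simp at step ⊢
      linear_combination (q ^ (N ^ 2 + N)) * step
    rw [ih, key]
    ring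

lemma hasSum_T : (∑' n : ℕ, q ^ (n ^ 2 + n) / (negPoch q n * negPoch q (n + 1))) = Sf q 0 := by
  have hsum : Summable fun n : ℕ => q ^ (n ^ 2 + n) / (negPoch q n * negPoch q (n + 1)) :=
    (summable_T_norm hq).of_norm
  have hrem : Tendsto (fun N : ℕ => q ^ (N ^ 2 + N) / negPoch q N * Sf q N) atTop (𝓝 0) := by
    apply squeeze_zero_norm
      (a := fun N : ℕ => ((pochLB q)⁻¹ * ((pochLB q)⁻¹ * (1 - ‖q‖)⁻¹)) * ‖q‖ ^ N)
    · intro N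
      rw [norm_mul, norm_div, norm_pow]
      have h1 : ‖q‖ ^ (N ^ 2 + N) ≤ ‖q‖ ^ N :=
        pow_le_pow_of_le_one (norm_nonneg q) (le_of_lt hq)
          (le_trans (Nat.le_self_pow two_ne_zero N) (Nat.le_add_right _ _))
      calc ‖q‖ ^ (N ^ 2 + N) / ‖negPoch q N‖ * ‖Sf q N‖
          = ‖q‖ ^ (N ^ 2 + N) * ‖negPoch q N‖⁻¹ * ‖Sf q N‖ := by rw [div_eq_mul_inv]
        _ ≤ ‖q‖ ^ N * (pochLB q)⁻¹ * ((pochLB q)⁻¹ * (1 - ‖q‖)⁻¹) := by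
            apply mul_le_mul _ (Sf_norm_le hq N) (norm_nonneg _)
            · exact mul_nonneg (by positivity) (inv_nonneg.mpr (le_of_lt (pochLB_pos q)))
            · exact mul_le_mul h1 (norm_negPoch_inv_le hq N) (by positivity) (by positivity)
        _ = ((pochLB q)⁻¹ * ((pochLB q)⁻¹ * (1 - ‖q‖)⁻¹)) * ‖q‖ ^ N := by ring
    · have := tendsto_pow_atTop_nhds_zero_of_lt_one (norm_nonneg q) hq
      simpa using this.const_mul ((pochLB q)⁻¹ * ((pochLB q)⁻¹ * (1 - ‖q‖)⁻¹))
  have h1 : Tendsto (fun N : ℕ => ∑ n ∈ Finset.range N,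
      q ^ (n ^ 2 + n) / (negPoch q n * negPoch q (n + 1))) atTop (𝓝 (Sf q 0)) := by
    have : (fun N : ℕ => ∑ n ∈ Finset.range N,
        q ^ (n ^ 2 + n) / (negPoch q n * negPoch q (n + 1)))
        = fun N : ℕ => Sf q 0 - q ^ (N ^ 2 + N) / negPoch q N * Sf q N := by
      funext N
      have := Sf_unroll hq N
      linear_combination -this
    rw [this]
    simpa using tendsto_const_nhds.sub hrem
  exact tendsto_nhds_unique hsum.hasSum.tendsto_sum_nat h1


lemma tele : ∀ N : ℕ, (∑ n ∈ Finset.range (N + 1),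
      (q ^ (n ^ 2) / (negPoch q n) ^ 2 + q ^ (n ^ 2 + n) / (negPoch q n * negPoch q (n + 1))))
    = 2 - q ^ ((N + 1) ^ 2) / (negPoch q N * negPoch q (N + 1)) := by
  intro N
  induction N with
  | zero =>
    have h1 : (1 : ℂ) + q ≠ 0 := by
      have := one_add_pow_ne_zero hq 0
      rwa [zero_add, pow_one] at this
    rw [Finset.sum_range_one]
    norm_num [negPoch_succ, negPoch_zero]
    field_simp
    ring
  | succ N ih =>
    rw [Finset.sum_range_succ, ih]
    have hPN1 : negPoch q (N + 1) ≠ 0 := negPoch_ne_zero hq (N + 1)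
    have hPN : negPoch q N ≠ 0 := negPoch_ne_zero hq N
    have hx : (1 : ℂ) + q ^ (N + 1) ≠ 0 := one_add_pow_ne_zero hq N
    have hz : (1 : ℂ) + q ^ (N + 1 + 1) ≠ 0 := one_add_pow_ne_zero hq (N + 1)
    have hP1 : negPoch q (N + 1) = negPoch q N * (1 + q ^ (N + 1)) := negPoch_succ q N
    have hP2 : negPoch q (N + 1 + 1) = negPoch q (N + 1) * (1 + q ^ (N + 1 + 1)) :=
      negPoch_succ q (N + 1)
    rw [show (N + 1 + 1) ^ 2 = (N + 1) ^ 2 + ((N + 1) + (N + 1 + 1)) by ring,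
      pow_add q ((N + 1) ^ 2) ((N + 1) + (N + 1 + 1)), pow_add q (N + 1) (N + 1 + 1),
      pow_add q ((N + 1) ^ 2) (N + 1)]
    linear_combination tele_alg (negPoch q N) (negPoch q (N + 1)) (negPoch q (N + 1 + 1))
      (q ^ (N + 1)) (q ^ (N + 1 + 1)) (q ^ ((N + 1) ^ 2)) hP1 hP2 hPN hx hz

theorem fine_identity_core :
    (∑' n : ℕ, q ^ (n ^ 2) / (negPoch q n) ^ 2)
      = 1 - ∑' n : ℕ, (-1 : ℂ) ^ (n + 1) * q ^ (n + 1) / negPoch q (n + 1) := by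
  have hsumL : Summable fun n : ℕ => q ^ (n ^ 2) / (negPoch q n) ^ 2 :=
    (summable_L_norm hq).of_norm
  have hsumT : Summable fun n : ℕ => q ^ (n ^ 2 + n) / (negPoch q n * negPoch q (n + 1)) :=
    (summable_T_norm hq).of_norm
  -- the combined telescoping sum equals 2
  have hW : (∑' n : ℕ, (q ^ (n ^ 2) / (negPoch q n) ^ 2
      + q ^ (n ^ 2 + n) / (negPoch q n * negPoch q (n + 1)))) = 2 := by
    have hsumW := hsumL.add hsumT
    have hrem : Tendsto (fun N : ℕ => q ^ ((N + 1) ^ 2) / (negPoch q N * negPoch q (N + 1)))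
        atTop (𝓝 0) := by
      apply squeeze_zero_norm
        (a := fun N : ℕ => ((pochLB q)⁻¹ * (pochLB q)⁻¹) * ‖q‖ ^ N)
      · intro N
        rw [norm_div, norm_mul, norm_pow]
        have h1 : ‖q‖ ^ ((N + 1) ^ 2) ≤ ‖q‖ ^ N :=
          pow_le_pow_of_le_one (norm_nonneg q) (le_of_lt hq) (by nlinarith)
        have h2 : (‖negPoch q N‖ * ‖negPoch q (N + 1)‖)⁻¹ ≤ (pochLB q)⁻¹ * (pochLB q)⁻¹ := by
          rw [mul_inv]
          exact mul_le_mul (norm_negPoch_inv_le hq N) (norm_negPoch_inv_le hq (N + 1))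
            (by positivity) (inv_nonneg.mpr (le_of_lt (pochLB_pos q)))
        calc ‖q‖ ^ ((N + 1) ^ 2) / (‖negPoch q N‖ * ‖negPoch q (N + 1)‖)
            = ‖q‖ ^ ((N + 1) ^ 2) * (‖negPoch q N‖ * ‖negPoch q (N + 1)‖)⁻¹ :=
              div_eq_mul_inv _ _
          _ ≤ ‖q‖ ^ N * ((pochLB q)⁻¹ * (pochLB q)⁻¹) :=
              mul_le_mul h1 h2 (by positivity) (by positivity)
          _ = ((pochLB q)⁻¹ * (pochLB q)⁻¹) * ‖q‖ ^ N := by ring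
      · have := tendsto_pow_atTop_nhds_zero_of_lt_one (norm_nonneg q) hq
        simpa using this.const_mul ((pochLB q)⁻¹ * (pochLB q)⁻¹)
    have h1 : Tendsto (fun N : ℕ => ∑ n ∈ Finset.range (N + 1),
        (q ^ (n ^ 2) / (negPoch q n) ^ 2
          + q ^ (n ^ 2 + n) / (negPoch q n * negPoch q (n + 1)))) atTop (𝓝 2) := by
      have heq : (fun N : ℕ => ∑ n ∈ Finset.range (N + 1),
          (q ^ (n ^ 2) / (negPoch q n) ^ 2
            + q ^ (n ^ 2 + n) / (negPoch q n * negPoch q (n + 1))))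
          = fun N : ℕ => 2 - q ^ ((N + 1) ^ 2) / (negPoch q N * negPoch q (N + 1)) := by
        funext N; exact tele hq N
      rw [heq]
      simpa using tendsto_const_nhds.sub hrem
    have h2 : Tendsto (fun N : ℕ => ∑ n ∈ Finset.range (N + 1),
        (q ^ (n ^ 2) / (negPoch q n) ^ 2
          + q ^ (n ^ 2 + n) / (negPoch q n * negPoch q (n + 1)))) atTop
        (𝓝 (∑' n : ℕ, (q ^ (n ^ 2) / (negPoch q n) ^ 2
          + q ^ (n ^ 2 + n) / (negPoch q n * negPoch q (n + 1))))) :=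
      hsumW.hasSum.tendsto_sum_nat.comp (tendsto_add_atTop_nat 1)
    exact tendsto_nhds_unique h2 h1
  rw [Summable.tsum_add hsumL hsumT] at hW
  -- Sf q 0 in terms of the RHS series
  have hS0 : Sf q 0 = 1 + ∑' n : ℕ, (-1 : ℂ) ^ (n + 1) * q ^ (n + 1) / negPoch q (n + 1) := by
    rw [Sf, Summable.tsum_eq_zero_add (summable_S hq 0)]
    congr 1
    · norm_num [negPoch_zero]
    · apply tsum_congr
      intro n
      norm_num
  have hT := hasSum_T hq
  rw [hT, hS0] at hW
  linear_combination hW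

end Main2


theorem fine_identity (q : ℂ) (hq : ‖q‖ < 1) :
    Summable (fun n : ℕ => ‖q ^ (n ^ 2) / (negPoch q n) ^ 2‖) ∧
    Summable (fun n : ℕ => ‖(-1 : ℂ) ^ (n + 1) * q ^ (n + 1) / negPoch q (n + 1)‖) ∧
    (∑' n : ℕ, q ^ (n ^ 2) / (negPoch q n) ^ 2)
      = 1 - ∑' n : ℕ, (-1 : ℂ) ^ (n + 1) * q ^ (n + 1) / negPoch q (n + 1) := by
  exact ⟨summable_L_norm hq, summable_R_norm hq, fine_identity_core hq⟩
end
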